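/- Let p be any probability distribution on {1,...,M_x} × {1,...,M_y} with 2 ≤ M_x ≤ M_y, and let α ∈ (0,1]. Let (X_1,Y_1),...,(X_n,Y_n) be an i.i.d. sample of size n from p, with empirical distribution p̂_n. Set ε = sqrt((2/n)·ln((2^{M_x·M_y} − 2)/α)) and define ΔI(ε) = (ε/2)·log[(M_x·M_y − 1)(M_x − 1)(M_y − 1)] + 3·ℋ(ε/2) if ε ≤ 2 − 2/M_x, and ΔI(ε) = log M_x if ε > 2 − 2/M_x. Then Pr{ I(p̂_n) − ΔI(ε) ≤ I(p) ≤ I(p̂_n) + ΔI(ε) } ≥ 1 − α, where I denotes mutual information. -/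

import Mathlib

open scoped BigOperators
open MeasureTheory

/-- `p` is a probability distribution on the finite type `α`. -/
def IsDist {α : Type*} [Fintype α] (p : α → ℝ) : Prop :=
  (∀ a, 0 ≤ p a) ∧ ∑ a, p a = 1

/-- Shannon entropy (natural logarithm, with `0 · log 0 = 0`). -/
noncomputable def entropy {α : Type*} [Fintype α] (p : α → ℝ) : ℝ :=
  -∑ a, p a * Real.log (p a)

/-- Variational distance between two distributions on the same finite set. -/
noncomputable def Vdist {α : Type*} [Fintype α] (p q : α → ℝ) : ℝ :=
  ∑ a, |p a - q a|

/-- First marginal of a joint distribution. -/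
noncomputable def margX {Mx My : ℕ} (p : Fin Mx × Fin My → ℝ) : Fin Mx → ℝ :=
  fun i => ∑ j, p (i, j)

/-- Second marginal of a joint distribution. -/
noncomputable def margY {Mx My : ℕ} (p : Fin Mx × Fin My → ℝ) : Fin My → ℝ :=
  fun j => ∑ i, p (i, j)

/-- Mutual information of a joint distribution. -/
noncomputable def mutInfo {Mx My : ℕ} (p : Fin Mx × Fin My → ℝ) : ℝ :=
  entropy (margX p) + entropy (margY p) - entropy p

/-- Binary entropy function. -/
noncomputable def binEnt (x : ℝ) : ℝ :=
  -x * Real.log x - (1 - x) * Real.log (1 - x)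

/-- The measure on a finite type induced by a (real-valued) distribution `p`. -/
noncomputable def distMeasure {α : Type*} [Fintype α] [MeasurableSpace α]
    (p : α → ℝ) : Measure α :=
  ∑ a : α, ENNReal.ofReal (p a) • Measure.dirac a

/-- The empirical distribution of the sample `Z 0 ω, …, Z (n-1) ω`. -/
noncomputable def empDist {α : Type*} [Fintype α] [DecidableEq α] {Ω : Type*} {n : ℕ}
    (Z : Fin n → Ω → α) (ω : Ω) : α → ℝ :=
  fun a => ((Finset.univ.filter fun k => Z k ω = a).card : ℝ) / n

open Finset

/-- Log-sum inequality. -/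
lemma logsum {ι : Type*} (s : Finset ι) (x y : ι → ℝ)
    (hx : ∀ i ∈ s, 0 ≤ x i) (hy : ∀ i ∈ s, 0 ≤ y i)
    (hxy : ∀ i ∈ s, x i ≠ 0 → y i ≠ 0) :
    ∑ i ∈ s, x i * Real.log (y i / x i) ≤
      (∑ i ∈ s, x i) * Real.log ((∑ i ∈ s, y i) / (∑ i ∈ s, x i)) := by
  rcases eq_or_lt_of_le (Finset.sum_nonneg hx) with h0 | hXpos
  · have hzero : ∀ i ∈ s, x i = 0 :=
      (Finset.sum_eq_zero_iff_of_nonneg hx).1 h0.symm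
    rw [Finset.sum_congr rfl (fun i hi => by rw [hzero i hi, zero_mul]), ← h0]
    simp
  · have hYpos : 0 < ∑ i ∈ s, y i := by
      rcases eq_or_lt_of_le (Finset.sum_nonneg hy) with h0' | h
      · exfalso
        have hzero : ∀ i ∈ s, y i = 0 :=
          (Finset.sum_eq_zero_iff_of_nonneg hy).1 h0'.symm
        have : (∑ i ∈ s, x i) = 0 := by
          apply Finset.sum_eq_zero
          intro i hi
          by_contra hxi
          exact hxy i hi hxi (hzero i hi)
        rw [this] at hXpos; exact lt_irrefl _ hXpos
      · exact h
    set X := ∑ i ∈ s, x i with hX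
    set Y := ∑ i ∈ s, y i with hY
    have key : ∀ i ∈ s, x i * Real.log (y i / x i) ≤
        y i * X / Y - x i + x i * Real.log (Y / X) := by
      intro i hi
      rcases eq_or_lt_of_le (hx i hi) with h0 | hpos
      · rw [← h0]
        have hyi : 0 ≤ y i := hy i hi
        have : 0 ≤ y i * X / Y := by positivity
        simpa using this
      · have hyi : 0 < y i := by
          rcases eq_or_lt_of_le (hy i hi) with h0' | h; · exact absurd h0'.symm (hxy i hi hpos.ne')
          · exact h
        have harg : 0 < y i * X / (x i * Y) := by positivity
        have hlog : Real.log (y i * X / (x i * Y)) ≤ y i * X / (x i * Y) - 1 :=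
          Real.log_le_sub_one_of_pos harg
        have hsplit : Real.log (y i / x i) = Real.log (y i * X / (x i * Y)) + Real.log (Y / X) := by
          rw [← Real.log_mul (by positivity) (by positivity)]
          congr 1
          field_simp
        rw [hsplit, mul_add]
        have : x i * Real.log (y i * X / (x i * Y)) ≤ y i * X / Y - x i := by
          calc x i * Real.log (y i * X / (x i * Y)) ≤ x i * (y i * X / (x i * Y) - 1) := by
                exact mul_le_mul_of_nonneg_left hlog hpos.le
            _ = y i * X / Y - x i := by field_simp
        linarith
    calc ∑ i ∈ s, x i * Real.log (y i / x i)
        ≤ ∑ i ∈ s, (y i * X / Y - x i + x i * Real.log (Y / X)) := Finset.sum_le_sum key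
      _ = Y * X / Y - X + X * Real.log (Y / X) := by
          rw [Finset.sum_add_distrib, Finset.sum_sub_distrib, ← Finset.sum_mul, ← hX]
          congr 2
          rw [← Finset.sum_div, ← Finset.sum_mul, ← hY]
      _ = X * Real.log (Y / X) := by field_simp; ring
/-- Entropy of the first marginal is at most the entropy of the joint. -/
lemma entropy_marg_fst_le {γ δ : Type*} [Fintype γ] [Fintype δ] (w : γ × δ → ℝ)
    (hw : ∀ x, 0 ≤ w x) :
    entropy (fun a => ∑ b, w (a, b)) ≤ entropy w := by
  unfold entropy
  rw [neg_le_neg_iff, Fintype.sum_prod_type]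
  have key : ∀ a : γ, ∑ b, w (a, b) * Real.log (w (a, b)) ≤
      (∑ b, w (a, b)) * Real.log (∑ b, w (a, b)) := by
    intro a
    rw [Finset.sum_mul]
    apply Finset.sum_le_sum
    intro b _
    rcases eq_or_lt_of_le (hw (a, b)) with h0 | hpos
    · rw [← h0]; simp
    · apply mul_le_mul_of_nonneg_left _ (hw (a, b))
      apply Real.log_le_log hpos
      exact Finset.single_le_sum (fun b' _ => hw (a, b')) (Finset.mem_univ b)
  exact Finset.sum_le_sum (fun a _ => key a)

/-- Entropy of the second marginal is at most the entropy of the joint. -/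
lemma entropy_marg_snd_le {γ δ : Type*} [Fintype γ] [Fintype δ] (w : γ × δ → ℝ)
    (hw : ∀ x, 0 ≤ w x) :
    entropy (fun b => ∑ a, w (a, b)) ≤ entropy w := by
  have := entropy_marg_fst_le (fun x : δ × γ => w (x.2, x.1)) (fun x => hw _)
  refine le_trans this (le_of_eq ?_)
  unfold entropy
  rw [neg_inj, Fintype.sum_prod_type, Fintype.sum_prod_type]
  rw [Finset.sum_comm]

/-- Entropy is at most log of the cardinality. -/
lemma entropy_le_log_card {γ : Type*} [Fintype γ] (p : γ → ℝ) (hp : IsDist p) :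
    entropy p ≤ Real.log (Fintype.card γ) := by
  have h := logsum Finset.univ p (fun _ => (1 : ℝ)) (fun i _ => hp.1 i)
    (fun i _ => zero_le_one) (fun i _ _ => one_ne_zero)
  rw [hp.2] at h
  simp only [Finset.sum_const, Finset.card_univ, nsmul_eq_mul, mul_one, one_mul, div_one] at h
  unfold entropy
  rw [← Finset.sum_neg_distrib]
  refine le_trans (le_of_eq ?_) h
  apply Finset.sum_congr rfl
  intro i _
  rcases eq_or_lt_of_le (hp.1 i) with h0 | hpos
  · rw [← h0]; simp
  · rw [one_div, Real.log_inv]; ring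

lemma isDist_margX {Mx My : ℕ} {p : Fin Mx × Fin My → ℝ} (hp : IsDist p) :
    IsDist (margX p) := by
  constructor
  · intro a; exact Finset.sum_nonneg (fun b _ => hp.1 (a, b))
  · rw [← hp.2, Fintype.sum_prod_type]; rfl

lemma isDist_margY {Mx My : ℕ} {p : Fin Mx × Fin My → ℝ} (hp : IsDist p) :
    IsDist (margY p) := by
  constructor
  · intro b; exact Finset.sum_nonneg (fun a _ => hp.1 (a, b))
  · rw [← hp.2, Fintype.sum_prod_type, Finset.sum_comm]; rfl

lemma neg_mutInfo_eq {Mx My : ℕ} (p : Fin Mx × Fin My → ℝ) (hp : IsDist p) :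
    ∑ x : Fin Mx × Fin My, p x * Real.log ((margX p x.1 * margY p x.2) / p x)
      = -(mutInfo p) := by
  have hA : ∀ x : Fin Mx × Fin My, p x * Real.log ((margX p x.1 * margY p x.2) / p x)
      = p x * Real.log (margX p x.1) + p x * Real.log (margY p x.2) - p x * Real.log (p x) := by
    intro x
    rcases eq_or_lt_of_le (hp.1 x) with h0 | hpos
    · rw [← h0]; ring
    · have hmx : 0 < margX p x.1 := lt_of_lt_of_le hpos (by
        exact Finset.single_le_sum (fun b _ => hp.1 (x.1, b)) (Finset.mem_univ x.2))
      have hmy : 0 < margY p x.2 := lt_of_lt_of_le hpos (by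
        exact Finset.single_le_sum (fun a _ => hp.1 (a, x.2)) (Finset.mem_univ x.1))
      rw [Real.log_div (by positivity) hpos.ne', Real.log_mul hmx.ne' hmy.ne']
      ring
  rw [Finset.sum_congr rfl (fun x _ => hA x), Finset.sum_sub_distrib, Finset.sum_add_distrib]
  have h1 : ∑ x : Fin Mx × Fin My, p x * Real.log (margX p x.1)
      = ∑ a, margX p a * Real.log (margX p a) := by
    rw [Fintype.sum_prod_type]
    exact Finset.sum_congr rfl (fun a _ =>
      (Finset.sum_mul Finset.univ (fun b => p (a, b)) (Real.log (margX p a))).symm)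
  have h2 : ∑ x : Fin Mx × Fin My, p x * Real.log (margY p x.2)
      = ∑ b, margY p b * Real.log (margY p b) := by
    rw [Fintype.sum_prod_type, Finset.sum_comm]
    exact Finset.sum_congr rfl (fun b _ =>
      (Finset.sum_mul Finset.univ (fun a => p (a, b)) (Real.log (margY p b))).symm)
  rw [h1, h2]
  unfold mutInfo entropy
  ring

lemma mutInfo_nonneg {Mx My : ℕ} (p : Fin Mx × Fin My → ℝ) (hp : IsDist p) :
    0 ≤ mutInfo p := by
  have h := logsum Finset.univ p (fun x : Fin Mx × Fin My => margX p x.1 * margY p x.2)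
    (fun x _ => hp.1 x)
    (fun x _ => mul_nonneg ((isDist_margX hp).1 x.1) ((isDist_margY hp).1 x.2))
    (fun x _ hx => by
      have hpos : 0 < p x := lt_of_le_of_ne (hp.1 x) (Ne.symm hx)
      have hmx : 0 < margX p x.1 := lt_of_lt_of_le hpos
        (Finset.single_le_sum (fun b _ => hp.1 (x.1, b)) (Finset.mem_univ x.2))
      have hmy : 0 < margY p x.2 := lt_of_lt_of_le hpos
        (Finset.single_le_sum (fun a _ => hp.1 (a, x.2)) (Finset.mem_univ x.1))
      positivity)
  rw [neg_mutInfo_eq p hp, hp.2] at h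
  have hy : ∑ x : Fin Mx × Fin My, margX p x.1 * margY p x.2 = 1 := by
    rw [Fintype.sum_prod_type]
    have : ∀ a, ∑ b, margX p a * margY p b = margX p a := by
      intro a
      rw [← Finset.mul_sum, (isDist_margY hp).2, mul_one]
    rw [Finset.sum_congr rfl (fun a _ => this a), (isDist_margX hp).2]
  rw [hy] at h
  simp at h
  linarith

lemma mutInfo_le_log {Mx My : ℕ} (p : Fin Mx × Fin My → ℝ) (hp : IsDist p) :
    mutInfo p ≤ Real.log Mx := by
  have h1 : entropy (margY p) ≤ entropy p := entropy_marg_snd_le p hp.1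
  have h2 : entropy (margX p) ≤ Real.log Mx := by
    have := entropy_le_log_card (margX p) (isDist_margX hp)
    simpa using this
  unfold mutInfo
  linarith

lemma sum_diag_eq {γ : Type*} [Fintype γ] [DecidableEq γ] (f : γ × γ → ℝ) :
    ∑ x ∈ Finset.univ.filter (fun x : γ × γ => x.1 = x.2), f x = ∑ a, f (a, a) := by
  apply Finset.sum_nbij' (i := fun x => x.1) (j := fun a => (a, a))
  · intro x hx; simp
  · intro a _; simp
  · rintro ⟨x1, x2⟩ hx
    simp only [Finset.mem_filter] at hx
    rw [hx.2]
  · intro a _; rfl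
  · rintro ⟨x1, x2⟩ hx
    simp only [Finset.mem_filter] at hx
    rw [hx.2]

lemma vdist_nonneg {γ : Type*} [Fintype γ] (p q : γ → ℝ) : 0 ≤ Vdist p q :=
  Finset.sum_nonneg (fun a _ => abs_nonneg _)

lemma binEnt_zero : binEnt 0 = 0 := by simp [binEnt]

/-- Core entropy-difference bound via maximal coupling and log-sum. -/
lemma entropy_sub_le {γ : Type*} [Fintype γ] [DecidableEq γ] (p q : γ → ℝ)
    (hp : IsDist p) (hq : IsDist q) (hM : 2 ≤ Fintype.card γ) :
    entropy p - entropy q ≤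
      (Vdist p q / 2) * Real.log ((Fintype.card γ : ℝ) - 1) + binEnt (Vdist p q / 2) := by
  classical
  set t := Vdist p q / 2 with htdef
  set m : γ → ℝ := fun a => min (p a) (q a) with hmdef
  have hm_nonneg : ∀ a, 0 ≤ m a := fun a => le_min (hp.1 a) (hq.1 a)
  have hmp : ∀ a, m a ≤ p a := fun a => min_le_left _ _
  have hmq : ∀ a, m a ≤ q a := fun a => min_le_right _ _
  have habs : ∀ a, |p a - q a| = p a + q a - 2 * m a := by
    intro a
    simp only [hmdef]
    rcases le_total (p a) (q a) with h | h
    · rw [min_eq_left h, abs_of_nonpos (by linarith)]; ring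
    · rw [min_eq_right h, abs_of_nonneg (by linarith)]; ring
  have hmsum : ∑ a, m a = 1 - t := by
    have : Vdist p q = 2 - 2 * ∑ a, m a := by
      unfold Vdist
      rw [Finset.sum_congr rfl (fun a _ => habs a), Finset.sum_sub_distrib,
        Finset.sum_add_distrib, hp.2, hq.2, ← Finset.mul_sum]
      ring
    rw [htdef, this]; ring
  have ht0 : 0 ≤ t := by
    rw [htdef]; have := vdist_nonneg p q; linarith
  rcases eq_or_lt_of_le ht0 with ht_zero | htpos
  · -- t = 0 : p = q
    have hpq : p = q := by
      funext a
      have hV : ∑ b, |p b - q b| = 0 := by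
        have h' : Vdist p q = 0 := by rw [htdef] at ht_zero; linarith
        unfold Vdist at h'; exact h'
      have : ∀ b ∈ Finset.univ, |p b - q b| = 0 := by
        intro b hb
        have := (Finset.sum_eq_zero_iff_of_nonneg (fun b _ => abs_nonneg (p b - q b))).1 hV
        exact this b hb
      have := this a (Finset.mem_univ a)
      have := abs_eq_zero.1 this
      linarith
    rw [hpq, ← ht_zero, binEnt_zero]
    simp
  · -- main case t > 0
    set w : γ × γ → ℝ :=
      fun x => (if x.1 = x.2 then m x.1 else 0) + (p x.1 - m x.1) * (q x.2 - m x.2) / t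
      with hwdef
    have hw0 : ∀ x, 0 ≤ w x := by
      intro x
      apply add_nonneg
      · split <;> simp [hm_nonneg]
      · apply div_nonneg (mul_nonneg (by linarith [hmp x.1]) (by linarith [hmq x.2])) htpos.le
    have hpsum : ∑ a, (p a - m a) = t := by
      rw [Finset.sum_sub_distrib, hp.2, hmsum]; ring
    have hqsum : ∑ a, (q a - m a) = t := by
      rw [Finset.sum_sub_distrib, hq.2, hmsum]; ring
    have hfst : ∀ a, ∑ b, w (a, b) = p a := by
      intro a
      simp only [hwdef]
      rw [Finset.sum_add_distrib]
      have h1 : ∑ b, (if a = b then m a else 0) = m a := by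
        rw [Finset.sum_ite_eq]; simp
      have h2 : ∑ b, (p a - m a) * (q b - m b) / t = p a - m a := by
        rw [← Finset.sum_div, ← Finset.mul_sum, hqsum, mul_div_assoc,
          div_self htpos.ne', mul_one]
      rw [h1, h2]; ring
    have hsnd : ∀ b, ∑ a, w (a, b) = q b := by
      intro b
      simp only [hwdef]
      rw [Finset.sum_add_distrib]
      have h1 : ∑ a, (if a = b then m a else 0) = m b := by
        rw [Finset.sum_ite_eq']; simp
      have h2 : ∑ a, (p a - m a) * (q b - m b) / t = q b - m b := by
        rw [← Finset.sum_div]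
        rw [Finset.sum_congr rfl (fun a _ => mul_comm (p a - m a) (q b - m b)), ← Finset.mul_sum,
          hpsum, mul_div_assoc, div_self htpos.ne', mul_one]
      rw [h1, h2]; ring
    have hwsum : ∑ x : γ × γ, w x = 1 := by
      rw [Fintype.sum_prod_type]
      rw [Finset.sum_congr rfl (fun a _ => hfst a), hp.2]
    have hdiagw : ∀ a, w (a, a) = m a := by
      intro a
      have hprod : (p a - m a) * (q a - m a) = 0 := by
        rcases le_total (p a) (q a) with h | h
        · have : m a = p a := min_eq_left h
          rw [this]; ring
        · have : m a = q a := min_eq_right h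
          rw [this]; ring
      show (if a = a then m a else 0) + (p a - m a) * (q a - m a) / t = m a
      rw [if_pos rfl, hprod, zero_div, add_zero]
    -- Step 1 : entropy p ≤ entropy w
    have step1 : entropy p ≤ entropy w := by
      have := entropy_marg_fst_le w hw0
      have heq : (fun a => ∑ b, w (a, b)) = p := funext hfst
      rwa [heq] at this
    -- Step 2 : entropy w - entropy q = ∑ x, w x * log (q x.2 / w x)
    have hqw : ∀ x : γ × γ, w x ≤ q x.2 := by
      intro x
      rw [← hsnd x.2]
      exact Finset.single_le_sum (fun a _ => hw0 (a, x.2)) (Finset.mem_univ x.1)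
    have step2 : entropy w - entropy q = ∑ x : γ × γ, w x * Real.log (q x.2 / w x) := by
      have hterm : ∀ x : γ × γ, w x * Real.log (q x.2 / w x)
          = w x * Real.log (q x.2) - w x * Real.log (w x) := by
        intro x
        rcases eq_or_lt_of_le (hw0 x) with h0 | hpos
        · rw [← h0]; ring
        · rw [Real.log_div (by linarith [hqw x]) hpos.ne']; ring
      rw [Finset.sum_congr rfl (fun x _ => hterm x), Finset.sum_sub_distrib]
      have h1 : ∑ x : γ × γ, w x * Real.log (q x.2) = ∑ b, q b * Real.log (q b) := by
        rw [Fintype.sum_prod_type, Finset.sum_comm]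
        refine Finset.sum_congr rfl (fun b _ => ?_)
        exact (Finset.sum_mul Finset.univ (fun a => w (a, b)) (Real.log (q b))).symm.trans
          (by rw [hsnd b])
      rw [h1]
      unfold entropy
      ring
    -- Step 3-5 : split and bound
    set D := Finset.univ.filter (fun x : γ × γ => x.1 = x.2) with hD
    have hsplit := Finset.sum_filter_add_sum_filter_not Finset.univ
      (fun x : γ × γ => x.1 = x.2) (fun x => w x * Real.log (q x.2 / w x))
    beta_reduce at hsplit
    have hwD : ∑ x ∈ D, w x = 1 - t := by
      rw [hD, sum_diag_eq]
      rw [Finset.sum_congr rfl (fun a _ => hdiagw a), hmsum]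
    have hqD : ∑ x ∈ D, q x.2 = 1 := by
      rw [hD, sum_diag_eq]
      exact hq.2
    have hwDc : ∑ x ∈ Finset.univ.filter (fun x : γ × γ => ¬x.1 = x.2), w x = t := by
      have := Finset.sum_filter_add_sum_filter_not Finset.univ
        (fun x : γ × γ => x.1 = x.2) w
      beta_reduce at this
      rw [← hD] at this
      rw [hwD] at this
      -- this : (1 - t) + ∑ filter not = ∑ univ = 1
      have h2 : (1 - t) + ∑ x ∈ Finset.univ.filter (fun x : γ × γ => ¬x.1 = x.2), w x = 1 := by
        rw [this, hwsum]
      linarith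
    have hqDc : ∑ x ∈ Finset.univ.filter (fun x : γ × γ => ¬x.1 = x.2), q x.2
        = (Fintype.card γ : ℝ) - 1 := by
      have htot : ∑ x : γ × γ, q x.2 = (Fintype.card γ : ℝ) := by
        rw [Fintype.sum_prod_type]
        rw [Finset.sum_congr rfl (fun a _ => hq.2)]
        simp
      have := Finset.sum_filter_add_sum_filter_not Finset.univ
        (fun x : γ × γ => x.1 = x.2) (fun x : γ × γ => q x.2)
      beta_reduce at this
      rw [← hD, hqD, htot] at this
      linarith
    have hbound_diag : ∑ x ∈ D, w x * Real.log (q x.2 / w x)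
        ≤ (1 - t) * Real.log (1 / (1 - t)) := by
      have := logsum D w (fun x => q x.2) (fun x _ => hw0 x) (fun x _ => hq.1 x.2)
        (fun x _ hx => by
          have h1 : 0 < w x := lt_of_le_of_ne (hw0 x) (Ne.symm hx)
          have h2 := hqw x
          show q x.2 ≠ 0
          intro h; rw [h] at h2; linarith)
      beta_reduce at this
      rwa [hwD, hqD] at this
    have hbound_off : ∑ x ∈ Finset.univ.filter (fun x : γ × γ => ¬x.1 = x.2),
        w x * Real.log (q x.2 / w x) ≤ t * Real.log (((Fintype.card γ : ℝ) - 1) / t) := by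
      have := logsum (Finset.univ.filter (fun x : γ × γ => ¬x.1 = x.2)) w (fun x => q x.2)
        (fun x _ => hw0 x) (fun x _ => hq.1 x.2)
        (fun x _ hx => by
          have h1 : 0 < w x := lt_of_le_of_ne (hw0 x) (Ne.symm hx)
          have h2 := hqw x
          show q x.2 ≠ 0
          intro h; rw [h] at h2; linarith)
      beta_reduce at this
      rwa [hwDc, hqDc] at this
    -- combine
    have hMreal : (1 : ℝ) ≤ (Fintype.card γ : ℝ) - 1 := by
      have : (2 : ℝ) ≤ (Fintype.card γ : ℝ) := by exact_mod_cast hM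
      linarith
    have hfinal : entropy w - entropy q ≤
        (1 - t) * Real.log (1 / (1 - t)) + t * Real.log (((Fintype.card γ : ℝ) - 1) / t) := by
      rw [step2, ← hsplit]
      exact add_le_add hbound_diag hbound_off
    have halg : (1 - t) * Real.log (1 / (1 - t)) + t * Real.log (((Fintype.card γ : ℝ) - 1) / t)
        = t * Real.log ((Fintype.card γ : ℝ) - 1) + binEnt t := by
      rw [one_div, Real.log_inv, Real.log_div (by linarith) htpos.ne']
      unfold binEnt
      ring
    rw [halg] at hfinal
    linarith

lemma binEnt_one : binEnt 1 = 0 := by simp [binEnt]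

lemma g_le_log {M : ℝ} (hM : 2 ≤ M) {u : ℝ} (hu0 : 0 ≤ u) (hu1 : u ≤ 1) :
    u * Real.log (M - 1) + binEnt u ≤ Real.log M := by
  have hMpos : (0 : ℝ) < M := by linarith
  have hM1 : (1 : ℝ) ≤ M - 1 := by linarith
  have hlogM : 0 ≤ Real.log M := Real.log_nonneg (by linarith)
  rcases eq_or_lt_of_le hu0 with h0 | hupos
  · rw [← h0, binEnt_zero]; simpa using hlogM
  rcases eq_or_lt_of_le hu1 with h1 | hult
  · rw [h1, binEnt_one, one_mul, add_zero]
    exact Real.log_le_log (by linarith) (by linarith)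
  · set A := (M - 1) / (u * M) with hA
    set B := 1 / ((1 - u) * M) with hB
    have hApos : 0 < A := by rw [hA]; positivity
    have hBpos : 0 < B := by
      rw [hB]
      exact div_pos one_pos (mul_pos (by linarith) hMpos)
    have hlogA : Real.log A ≤ A - 1 := Real.log_le_sub_one_of_pos hApos
    have hlogB : Real.log B ≤ B - 1 := Real.log_le_sub_one_of_pos hBpos
    have hu1pos : 0 < 1 - u := by linarith
    have hAexp : Real.log A = Real.log (M - 1) - Real.log u - Real.log M := by
      rw [hA, Real.log_div (by linarith) (by positivity), Real.log_mul hupos.ne' hMpos.ne']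
      ring
    have hBexp : Real.log B = -Real.log (1 - u) - Real.log M := by
      rw [hB, one_div, Real.log_inv, Real.log_mul hu1pos.ne' hMpos.ne']
      ring
    have hkey : u * Real.log (M - 1) + binEnt u - Real.log M
        = u * Real.log A + (1 - u) * Real.log B := by
      rw [hAexp, hBexp]
      unfold binEnt
      ring
    have hsum : u * (A - 1) + (1 - u) * (B - 1) = 0 := by
      rw [hA, hB]
      field_simp
      ring
    have h1 : u * Real.log A ≤ u * (A - 1) := mul_le_mul_of_nonneg_left hlogA hu0
    have h2 : (1 - u) * Real.log B ≤ (1 - u) * (B - 1) :=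
      mul_le_mul_of_nonneg_left hlogB hu1pos.le
    linarith

lemma g_at_max {M : ℝ} (hM : 2 ≤ M) :
    (1 - 1 / M) * Real.log (M - 1) + binEnt (1 - 1 / M) = Real.log M := by
  have hMpos : (0 : ℝ) < M := by linarith
  have hM1 : (0 : ℝ) < M - 1 := by linarith
  have h1 : (1 : ℝ) - 1 / M = (M - 1) / M := by field_simp
  have h2 : (1 : ℝ) - (1 - 1 / M) = 1 / M := by ring
  unfold binEnt
  rw [h2, h1, Real.log_div hM1.ne' hMpos.ne', one_div, Real.log_inv]
  field_simp
  ring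

lemma concaveOn_binEnt_g (c : ℝ) :
    ConcaveOn ℝ (Set.Icc (0 : ℝ) 1) (fun u => u * c + binEnt u) := by
  have hb : (fun u : ℝ => u * c + binEnt u)
      = fun u => (u * c + Real.negMulLog u) + Real.negMulLog (1 - u) := by
    funext u
    rw [Real.negMulLog_def]
    unfold binEnt
    ring
  rw [hb]
  apply ConcaveOn.add
  · apply ConcaveOn.add
    · exact ⟨convex_Icc 0 1, fun x _ y _ a b _ _ hab => by
        simp only [smul_eq_mul]; ring_nf; exact le_refl _⟩
    · exact Real.concaveOn_negMulLog.subset (fun x hx => hx.1) (convex_Icc 0 1)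
  · constructor
    · exact convex_Icc 0 1
    · intro x hx y hy a b ha hb' hab
      have h1x : (1 : ℝ) - x ∈ Set.Ici (0 : ℝ) := by simp; linarith [hx.2]
      have h1y : (1 : ℝ) - y ∈ Set.Ici (0 : ℝ) := by simp; linarith [hy.2]
      have := Real.concaveOn_negMulLog.2 h1x h1y ha hb' hab
      have heq : a • (1 - x) + b • (1 - y) = 1 - (a • x + b • y) := by
        simp only [smul_eq_mul]
        nlinarith [hab]
      rwa [heq] at this

lemma g_mono {M : ℝ} (hM : 2 ≤ M) {t s : ℝ} (ht0 : 0 ≤ t) (hts : t ≤ s)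
    (hs : s ≤ 1 - 1 / M) :
    t * Real.log (M - 1) + binEnt t ≤ s * Real.log (M - 1) + binEnt s := by
  have hMpos : (0 : ℝ) < M := by linarith
  have hble : 1 - 1 / M ≤ 1 := by
    have : 0 < 1 / M := by positivity
    linarith
  have hb0 : 0 ≤ 1 - 1 / M := by
    have : 1 / M ≤ 1 / 2 := by
      apply div_le_div_of_nonneg_left one_pos.le (by norm_num) hM  -- may need fixing
    linarith
  rcases eq_or_lt_of_le hts with h | hlt
  · rw [h]
  set b := 1 - 1 / M with hbdef
  set g := fun u : ℝ => u * Real.log (M - 1) + binEnt u with hg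
  have hcon := concaveOn_binEnt_g (Real.log (M - 1))
  have htb : t < b := lt_of_lt_of_le hlt hs
  set θ := (s - t) / (b - t) with hθ
  have hθ0 : 0 ≤ θ := by
    apply div_nonneg (by linarith) (by linarith)
  have hθ1 : θ ≤ 1 := by
    rw [hθ, div_le_one (by linarith)]
    linarith
  have hmem_t : t ∈ Set.Icc (0 : ℝ) 1 := ⟨ht0, by linarith⟩
  have hmem_b : b ∈ Set.Icc (0 : ℝ) 1 := ⟨hb0, hble⟩
  have hcomb : (1 - θ) • t + θ • b = s := by
    have hbt : b - t ≠ 0 := by linarith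
    have hmul : θ * (b - t) = s - t := by
      rw [hθ]; exact div_mul_cancel₀ _ hbt
    simp only [smul_eq_mul]
    nlinarith [hmul]
  have := hcon.2 hmem_t hmem_b (by linarith : (0:ℝ) ≤ 1 - θ) hθ0 (by ring)
  rw [hcomb] at this
  have hgb : b * Real.log (M - 1) + binEnt b = Real.log M := g_at_max hM
  have hgt : t * Real.log (M - 1) + binEnt t ≤ Real.log M := g_le_log hM ht0 (by linarith)
  simp only [smul_eq_mul] at this
  nlinarith [this]

lemma vdist_symm {γ : Type*} [Fintype γ] (p q : γ → ℝ) : Vdist p q = Vdist q p := by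
  unfold Vdist
  exact Finset.sum_congr rfl (fun a _ => abs_sub_comm _ _)

lemma vdist_margX_le {Mx My : ℕ} (p q : Fin Mx × Fin My → ℝ) :
    Vdist (margX p) (margX q) ≤ Vdist p q := by
  unfold Vdist margX
  rw [Fintype.sum_prod_type]
  apply Finset.sum_le_sum
  intro a _
  rw [← Finset.sum_sub_distrib]
  exact Finset.abs_sum_le_sum_abs _ _

lemma vdist_margY_le {Mx My : ℕ} (p q : Fin Mx × Fin My → ℝ) :
    Vdist (margY p) (margY q) ≤ Vdist p q := by
  unfold Vdist margY
  rw [Fintype.sum_prod_type, Finset.sum_comm]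
  apply Finset.sum_le_sum
  intro b _
  rw [← Finset.sum_sub_distrib]
  exact Finset.abs_sum_le_sum_abs _ _

lemma abs_entropy_sub_le {γ : Type*} [Fintype γ] [DecidableEq γ] (p q : γ → ℝ)
    (hp : IsDist p) (hq : IsDist q) (hM : 2 ≤ Fintype.card γ) :
    |entropy p - entropy q| ≤
      (Vdist p q / 2) * Real.log ((Fintype.card γ : ℝ) - 1) + binEnt (Vdist p q / 2) := by
  apply abs_le.mpr
  constructor
  · have := entropy_sub_le q p hq hp hM
    rw [vdist_symm q p] at this
    linarith
  · exact entropy_sub_le p q hp hq hM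

/-- Theorem 1 : deterministic continuity bound for mutual information. -/
lemma mutInfo_cont {Mx My : ℕ} (hMx : 2 ≤ Mx) (hMxy : Mx ≤ My)
    (p q : Fin Mx × Fin My → ℝ) (hp : IsDist p) (hq : IsDist q)
    (ε : ℝ) (hε0 : 0 ≤ ε) (hV : Vdist q p ≤ ε) (hcond : ε ≤ 2 - 2 / (Mx : ℝ)) :
    |mutInfo q - mutInfo p| ≤
      ε / 2 * Real.log (((Mx : ℝ) * My - 1) * ((Mx : ℝ) - 1) * ((My : ℝ) - 1)) +
        3 * binEnt (ε / 2) := by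
  have hMy : 2 ≤ My := le_trans hMx hMxy
  have hMxR : (2 : ℝ) ≤ (Mx : ℝ) := by exact_mod_cast hMx
  have hMyR : (2 : ℝ) ≤ (My : ℝ) := by exact_mod_cast hMy
  have hMxyR : (Mx : ℝ) ≤ (My : ℝ) := by exact_mod_cast hMxy
  have hMMR : (2 : ℝ) ≤ (Mx : ℝ) * (My : ℝ) := by nlinarith
  -- the half-width at ε/2
  have hs1 : ε / 2 ≤ 1 - 1 / (Mx : ℝ) := by
    have h2 : 2 / (Mx : ℝ) = 2 * (1 / (Mx : ℝ)) := by ring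
    rw [h2] at hcond
    linarith
  have hsmy : ε / 2 ≤ 1 - 1 / (My : ℝ) := by
    have : 1 / (My : ℝ) ≤ 1 / (Mx : ℝ) :=
      one_div_le_one_div_of_le (by linarith) hMxyR
    linarith
  have hsmm : ε / 2 ≤ 1 - 1 / ((Mx : ℝ) * (My : ℝ)) := by
    have : 1 / ((Mx : ℝ) * (My : ℝ)) ≤ 1 / (Mx : ℝ) := by
      apply one_div_le_one_div_of_le (by linarith)
      nlinarith
    linarith
  -- entropy bounds for the three terms
  have cardP : (Fintype.card (Fin Mx × Fin My) : ℝ) = (Mx : ℝ) * (My : ℝ) := by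
    rw [Fintype.card_prod, Fintype.card_fin, Fintype.card_fin]
    push_cast; ring
  have cardX : (Fintype.card (Fin Mx) : ℝ) = (Mx : ℝ) := by rw [Fintype.card_fin]
  have cardY : (Fintype.card (Fin My) : ℝ) = (My : ℝ) := by rw [Fintype.card_fin]
  have hbX : |entropy (margX q) - entropy (margX p)| ≤
      ε / 2 * Real.log ((Mx : ℝ) - 1) + binEnt (ε / 2) := by
    have h := abs_entropy_sub_le (margX q) (margX p) (isDist_margX hq) (isDist_margX hp)
      (by rw [Fintype.card_fin]; exact hMx)
    rw [cardX] at h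
    refine le_trans h ?_
    apply g_mono hMxR (by have := vdist_nonneg (margX q) (margX p); linarith) _ hs1
    have := vdist_margX_le q p
    linarith
  have hbY : |entropy (margY q) - entropy (margY p)| ≤
      ε / 2 * Real.log ((My : ℝ) - 1) + binEnt (ε / 2) := by
    have h := abs_entropy_sub_le (margY q) (margY p) (isDist_margY hq) (isDist_margY hp)
      (by rw [Fintype.card_fin]; exact hMy)
    rw [cardY] at h
    refine le_trans h ?_
    apply g_mono hMyR (by have := vdist_nonneg (margY q) (margY p); linarith) _ hsmy
    have := vdist_margY_le q p
    linarith
  have hbJ : |entropy q - entropy p| ≤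
      ε / 2 * Real.log ((Mx : ℝ) * (My : ℝ) - 1) + binEnt (ε / 2) := by
    have h := abs_entropy_sub_le q p hq hp
      (by rw [Fintype.card_prod, Fintype.card_fin, Fintype.card_fin]; nlinarith)
    rw [cardP] at h
    refine le_trans h ?_
    apply g_mono hMMR (by have := vdist_nonneg q p; linarith) _ hsmm
    linarith
  -- combine
  have hlog : Real.log (((Mx : ℝ) * My - 1) * ((Mx : ℝ) - 1) * ((My : ℝ) - 1))
      = Real.log ((Mx : ℝ) * (My : ℝ) - 1) + Real.log ((Mx : ℝ) - 1)
        + Real.log ((My : ℝ) - 1) := by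
    have hA : (0 : ℝ) < (Mx : ℝ) * My - 1 := by nlinarith
    have hB : (0 : ℝ) < (Mx : ℝ) - 1 := by linarith
    have hC : (0 : ℝ) < (My : ℝ) - 1 := by linarith
    rw [Real.log_mul (mul_pos hA hB).ne' hC.ne', Real.log_mul hA.ne' hB.ne']
  rw [hlog]
  have e1 := abs_le.mp hbX
  have e2 := abs_le.mp hbY
  have e3 := abs_le.mp hbJ
  apply abs_le.mpr
  unfold mutInfo
  constructor
  · obtain ⟨l1, r1⟩ := e1; obtain ⟨l2, r2⟩ := e2; obtain ⟨l3, r3⟩ := e3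
    linarith
  · obtain ⟨l1, r1⟩ := e1; obtain ⟨l2, r2⟩ := e2; obtain ⟨l3, r3⟩ := e3
    linarith

/-- Mutual information lies in `[0, log Mx]`, so differences are at most `log Mx`. -/
lemma abs_mutInfo_sub_le_log {Mx My : ℕ} (hMx : 2 ≤ Mx) (hMxy : Mx ≤ My)
    (p q : Fin Mx × Fin My → ℝ) (hp : IsDist p) (hq : IsDist q) :
    |mutInfo q - mutInfo p| ≤ Real.log Mx := by
  have h1 := mutInfo_nonneg p hp
  have h2 := mutInfo_nonneg q hq
  have h3 := mutInfo_le_log p hp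
  have h4 := mutInfo_le_log q hq
  apply abs_le.mpr
  constructor <;> linarith

/-- Hoeffding's lemma, Bernoulli case, nonnegative argument. -/
lemma exp_mgf_le_of_nonneg {a : ℝ} (ha : 0 ≤ a) (ha1 : a ≤ 1) {s : ℝ} (hs : 0 ≤ s) :
    1 - a + a * Real.exp s ≤ Real.exp (s * a + s ^ 2 / 8) := by
  set D : ℝ → ℝ := fun u => 1 - a + a * Real.exp u with hDdef
  have hD : ∀ u, 0 < D u := by
    intro u
    rcases eq_or_lt_of_le ha with h0 | hpos
    · simp [hDdef, ← h0]
    · have h1 : 0 < a * Real.exp u := mul_pos hpos (Real.exp_pos u)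
      simp only [hDdef]
      linarith
  set F : ℝ → ℝ := fun u => a + u / 4 - a * Real.exp u / D u with hFdef
  set φ : ℝ → ℝ := fun u => u * a + u ^ 2 / 8 - Real.log (D u) with hφdef
  have hDderiv : ∀ u, HasDerivAt D (a * Real.exp u) u := fun u => by
    exact ((Real.hasDerivAt_exp u).const_mul a).const_add (1 - a)
  have hφderiv : ∀ u, HasDerivAt φ (F u) u := by
    intro u
    have h1 : HasDerivAt (fun v : ℝ => v * a) a u := by
      simpa using (hasDerivAt_id u).mul_const a
    have h2 : HasDerivAt (fun v : ℝ => v ^ 2 / 8) (u / 4) u := by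
      have := (hasDerivAt_pow 2 u).div_const 8
      refine this.congr_deriv ?_
      norm_num
      ring
    have h3 : HasDerivAt (fun v => Real.log (D v)) (a * Real.exp u / D u) u :=
      (hDderiv u).log (hD u).ne'
    have := (h1.add h2).sub h3
    exact this
  have hFderiv : ∀ u, HasDerivAt F ((1 / 2 - a * Real.exp u / D u) ^ 2) u := by
    intro u
    have hdiv : HasDerivAt (fun v => a * Real.exp v / D v)
        ((a * Real.exp u * D u - a * Real.exp u * (a * Real.exp u)) / (D u) ^ 2) u :=
      ((Real.hasDerivAt_exp u).const_mul a).div (hDderiv u) (hD u).ne'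
    have h1 : HasDerivAt (fun v : ℝ => a + v / 4) (1 / 4) u := by
      simpa using ((hasDerivAt_id u).div_const 4).const_add a
    have h2 := h1.sub hdiv
    refine h2.congr_deriv ?_
    have hDu := (hD u).ne'
    field_simp
    ring
  have hFmono : Monotone F := by
    apply monotone_of_deriv_nonneg
    · intro u; exact (hFderiv u).differentiableAt
    · intro u; rw [(hFderiv u).deriv]; positivity
  have hF0 : F 0 = 0 := by
    simp only [hFdef, hDdef, Real.exp_zero, mul_one]
    rw [show (1 : ℝ) - a + a = 1 by ring]
    norm_num
  have hφmono : MonotoneOn φ (Set.Ici (0 : ℝ)) := by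
    apply monotoneOn_of_deriv_nonneg (convex_Ici 0)
    · have hdiff : Differentiable ℝ φ := fun u => (hφderiv u).differentiableAt
      exact hdiff.continuous.continuousOn
    · intro u _
      exact ((hφderiv u).differentiableAt).differentiableWithinAt
    · intro u hu
      rw [(hφderiv u).deriv]
      rw [interior_Ici] at hu
      have := hFmono (le_of_lt hu)
      rw [hF0] at this
      exact this
  have hφ0 : φ 0 = 0 := by
    simp only [hφdef, hDdef, Real.exp_zero, mul_one]
    rw [show (1 : ℝ) - a + a = 1 by ring]
    simp
  have hφs : 0 ≤ φ s := by
    have := hφmono (Set.mem_Ici.mpr le_rfl) (Set.mem_Ici.mpr hs) hs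
    rw [hφ0] at this
    exact this
  have hlog : Real.log (D s) ≤ s * a + s ^ 2 / 8 := by
    simp only [hφdef] at hφs; linarith
  calc 1 - a + a * Real.exp s = D s := rfl
    _ = Real.exp (Real.log (D s)) := (Real.exp_log (hD s)).symm
    _ ≤ Real.exp (s * a + s ^ 2 / 8) := Real.exp_le_exp.mpr hlog

/-- Hoeffding's lemma, Bernoulli case. -/
lemma exp_mgf_le {a : ℝ} (ha : 0 ≤ a) (ha1 : a ≤ 1) (s : ℝ) :
    1 - a + a * Real.exp s ≤ Real.exp (s * a + s ^ 2 / 8) := by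
  rcases le_or_gt 0 s with hs | hs
  · exact exp_mgf_le_of_nonneg ha ha1 hs
  · have h := exp_mgf_le_of_nonneg (a := 1 - a) (by linarith) (by linarith)
      (s := -s) (by linarith)
    have hes : (0 : ℝ) < Real.exp s := Real.exp_pos s
    have hL : Real.exp s * (1 - (1 - a) + (1 - a) * Real.exp (-s))
        = 1 - a + a * Real.exp s := by
      rw [Real.exp_neg]
      field_simp
      ring
    have hR : Real.exp s * Real.exp (-s * (1 - a) + (-s) ^ 2 / 8)
        = Real.exp (s * a + s ^ 2 / 8) := by
      rw [← Real.exp_add]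
      congr 1
      ring
    calc 1 - a + a * Real.exp s
        = Real.exp s * (1 - (1 - a) + (1 - a) * Real.exp (-s)) := hL.symm
      _ ≤ Real.exp s * Real.exp (-s * (1 - a) + (-s) ^ 2 / 8) :=
          mul_le_mul_of_nonneg_left h hes.le
      _ = Real.exp (s * a + s ^ 2 / 8) := hR

open MeasureTheory in
lemma integrable_of_fintype {γ : Type*} [Fintype γ] [MeasurableSpace γ]
    [MeasurableSingletonClass γ] (ν : Measure γ) [IsFiniteMeasure ν] (f : γ → ℝ) :
    Integrable f ν := by
  have hmeas : Measurable f := measurable_of_finite f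
  apply Integrable.mono' (integrable_const (∑ a, |f a|)) hmeas.aestronglyMeasurable
  apply ae_of_all
  intro x
  rw [Real.norm_eq_abs]
  exact Finset.single_le_sum (fun a _ => abs_nonneg (f a)) (Finset.mem_univ x)

open MeasureTheory in
lemma integral_distMeasure {γ : Type*} [Fintype γ] [MeasurableSpace γ]
    [MeasurableSingletonClass γ] (p : γ → ℝ) (hp : ∀ a, 0 ≤ p a) (f : γ → ℝ) :
    ∫ x, f x ∂(distMeasure p) = ∑ a, p a * f a := by
  unfold distMeasure
  rw [integral_finset_sum_measure]
  · apply Finset.sum_congr rfl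
    intro a _
    rw [integral_smul_measure, integral_dirac]
    rw [smul_eq_mul, ENNReal.toReal_ofReal (hp a)]
  · intro a _
    apply Integrable.smul_measure (integrable_of_fintype _ f)
    exact ENNReal.ofReal_ne_top

lemma isDist_empDist {γ : Type*} [Fintype γ] [DecidableEq γ] {Ω : Type*} {n : ℕ}
    (hn : 0 < n) (Z : Fin n → Ω → γ) (ω : Ω) : IsDist (empDist Z ω) := by
  constructor
  · intro a
    apply div_nonneg (Nat.cast_nonneg _) (Nat.cast_nonneg _)
  · unfold empDist
    rw [← Finset.sum_div]
    rw [← Nat.cast_sum]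
    have hcount : ∑ a : γ, (Finset.univ.filter fun k => Z k ω = a).card
        = (Finset.univ : Finset (Fin n)).card := by
      exact (Finset.card_eq_sum_card_fiberwise (fun k _ => Finset.mem_univ (Z k ω))).symm
    rw [hcount, Finset.card_univ, Fintype.card_fin]
    field_simp

open MeasureTheory ProbabilityTheory in
lemma chernoff_A {γ : Type*} [Fintype γ] [DecidableEq γ] [MeasurableSpace γ] [MeasurableSingletonClass γ]
    {Ω : Type*} [MeasurableSpace Ω] (μ : Measure Ω) [IsProbabilityMeasure μ]
    {n : ℕ} (Z : Fin n → Ω → γ) (hmeas : ∀ k, Measurable (Z k))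
    (hindep : ProbabilityTheory.iIndepFun Z μ)
    (p : γ → ℝ) (hp : IsDist p) (hdist : ∀ k, Measure.map (Z k) μ = distMeasure p)
    (A : Finset γ) {ε : ℝ} (hε0 : 0 ≤ ε) :
    (μ {ω | (n : ℝ) * ε / 2 ≤
        ∑ k : Fin n, ((if Z k ω ∈ A then (1 : ℝ) else 0) - ∑ a ∈ A, p a)}).toReal
      ≤ Real.exp (-((n : ℝ) * ε ^ 2) / 2) := by
  classical
  set pA : ℝ := ∑ a ∈ A, p a with hpAdef
  have hpA0 : 0 ≤ pA := Finset.sum_nonneg (fun a _ => hp.1 a)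
  have hpA1 : pA ≤ 1 := by
    rw [hpAdef, ← hp.2]
    exact Finset.sum_le_sum_of_subset_of_nonneg (Finset.subset_univ A)
      (fun a _ _ => hp.1 a)
  set t : ℝ := 2 * ε with htdef
  have ht0 : 0 ≤ t := by linarith
  set φ : γ → ℝ := fun a => (if a ∈ A then 1 else 0) - pA with hφdef
  have hφmeas : Measurable φ := measurable_of_finite φ
  set X : Fin n → Ω → ℝ := fun k => φ ∘ Z k with hXdef
  have hXmeas : ∀ k, Measurable (X k) := fun k => hφmeas.comp (hmeas k)
  have hXle : ∀ k ω, X k ω ≤ 1 := by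
    intro k ω
    simp only [hXdef, hφdef, Function.comp_apply]
    split <;> linarith
  have hindepX : ProbabilityTheory.iIndepFun X μ :=
    hindep.comp (fun _ => φ) (fun _ => hφmeas)
  -- mgf of each X k
  have hfilter : Finset.univ.filter (fun a => a ∈ A) = A := by ext a; simp
  have hmgf : ∀ k, mgf (X k) μ t ≤ Real.exp (t ^ 2 / 8) := by
    intro k
    have hg : Measurable (fun a : γ => Real.exp (t * φ a)) := measurable_of_finite _
    have h1 : mgf (X k) μ t = ∫ a, Real.exp (t * φ a) ∂(Measure.map (Z k) μ) := by
      unfold mgf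
      rw [integral_map (hmeas k).aemeasurable hg.aestronglyMeasurable]
      rfl
    rw [h1, hdist k, integral_distMeasure p hp.1]
    have h2 : ∑ a, p a * Real.exp (t * φ a)
        = Real.exp (-(t * pA)) * ∑ a, p a * Real.exp (t * (if a ∈ A then 1 else 0)) := by
      rw [Finset.mul_sum]
      apply Finset.sum_congr rfl
      intro a _
      simp only [hφdef]
      rw [show t * ((if a ∈ A then (1:ℝ) else 0) - pA)
          = t * (if a ∈ A then (1:ℝ) else 0) + (-(t * pA)) by ring]
      rw [Real.exp_add]
      ring
    have h3 : ∑ a, p a * Real.exp (t * (if a ∈ A then (1:ℝ) else 0))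
        = pA * Real.exp t + (1 - pA) := by
      have hsplit : ∑ a, p a * Real.exp (t * (if a ∈ A then (1:ℝ) else 0))
          = ∑ a, (if a ∈ A then p a * Real.exp t else p a) := by
        apply Finset.sum_congr rfl
        intro a _
        by_cases ha : a ∈ A <;> simp [ha]
      rw [hsplit, Finset.sum_ite]
      have hnot : ∑ a ∈ Finset.univ.filter (fun a => ¬a ∈ A), p a = 1 - pA := by
        have := Finset.sum_filter_add_sum_filter_not Finset.univ (fun a => a ∈ A) p
        rw [hfilter, hp.2] at this
        linarith
      rw [hnot, ← Finset.sum_mul, hfilter, ← hpAdef]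
    rw [h2, h3]
    have hbern : 1 - pA + pA * Real.exp t ≤ Real.exp (t * pA + t ^ 2 / 8) :=
      exp_mgf_le hpA0 hpA1 t
    calc Real.exp (-(t * pA)) * (pA * Real.exp t + (1 - pA))
        ≤ Real.exp (-(t * pA)) * Real.exp (t * pA + t ^ 2 / 8) := by
          apply mul_le_mul_of_nonneg_left _ (Real.exp_pos _).le
          linarith
      _ = Real.exp (t ^ 2 / 8) := by
          rw [← Real.exp_add]; congr 1; ring
  -- integrability
  have hint : ∀ (f : Ω → ℝ), Measurable f → (∀ ω, f ω ≤ (n : ℝ)) →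
      Integrable (fun ω => Real.exp (t * f ω)) μ := by
    intro f hf hfle
    apply Integrable.mono' (integrable_const (Real.exp (t * n)))
      ((hf.const_mul t).exp.aestronglyMeasurable)
    apply ae_of_all
    intro ω
    rw [Real.norm_eq_abs, abs_of_pos (Real.exp_pos _)]
    exact Real.exp_le_exp.mpr (mul_le_mul_of_nonneg_left (hfle ω) ht0)
  have hintk : ∀ k, Integrable (fun ω => Real.exp (t * X k ω)) μ := by
    intro k
    apply Integrable.mono' (integrable_const (Real.exp t))
      (((hXmeas k).const_mul t).exp.aestronglyMeasurable)
    apply ae_of_all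
    intro ω
    rw [Real.norm_eq_abs, abs_of_pos (Real.exp_pos _)]
    have := hXle k ω
    exact Real.exp_le_exp.mpr (by nlinarith)
  -- Chernoff
  set S : Ω → ℝ := ∑ k : Fin n, X k with hSdef
  have hSapp : ∀ ω, S ω = ∑ k, X k ω := by
    intro ω
    rw [hSdef, Finset.sum_apply]
  have hSmeas : Measurable S := by
    have h : S = fun ω => ∑ k, X k ω := funext hSapp
    rw [h]
    exact Finset.measurable_sum Finset.univ (fun k _ => hXmeas k)
  have hSle : ∀ ω, S ω ≤ (n : ℝ) := by
    intro ω
    rw [hSapp]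
    calc ∑ k, X k ω ≤ ∑ _k : Fin n, (1 : ℝ) :=
          Finset.sum_le_sum (fun k _ => hXle k ω)
      _ = n := by simp
  have hSint : Integrable (fun ω => Real.exp (t * S ω)) μ := hint S hSmeas hSle
  have hchern := measure_ge_le_exp_mul_mgf (X := S) (μ := μ) (t := t)
    ((n : ℝ) * ε / 2) ht0 hSint
  have hmgfS : mgf S μ t = ∏ k : Fin n, mgf (X k) μ t := by
    rw [hSdef]
    exact hindepX.mgf_sum hXmeas Finset.univ
  have hprod : ∏ k : Fin n, mgf (X k) μ t ≤ Real.exp ((n : ℝ) * (t ^ 2 / 8)) := by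
    calc ∏ k : Fin n, mgf (X k) μ t ≤ ∏ _k : Fin n, Real.exp (t ^ 2 / 8) :=
          Finset.prod_le_prod (fun k _ => mgf_nonneg) (fun k _ => hmgf k)
      _ = Real.exp (t ^ 2 / 8) ^ n := by
          rw [Finset.prod_const, Finset.card_univ, Fintype.card_fin]
      _ = Real.exp ((n : ℝ) * (t ^ 2 / 8)) := by
          rw [← Real.exp_nat_mul]
  have hset : {ω | (n : ℝ) * ε / 2 ≤
        ∑ k : Fin n, ((if Z k ω ∈ A then (1 : ℝ) else 0) - pA)}
      = {ω | (n : ℝ) * ε / 2 ≤ S ω} := by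
    ext ω
    simp only [Set.mem_setOf_eq, hSapp, hXdef, hφdef, Function.comp_apply]
  rw [hset]
  calc (μ {ω | (n : ℝ) * ε / 2 ≤ S ω}).toReal
      ≤ Real.exp (-t * ((n : ℝ) * ε / 2)) * mgf S μ t := hchern
    _ ≤ Real.exp (-t * ((n : ℝ) * ε / 2)) * Real.exp ((n : ℝ) * (t ^ 2 / 8)) := by
        apply mul_le_mul_of_nonneg_left _ (Real.exp_pos _).le
        rw [hmgfS]
        exact hprod
    _ = Real.exp (-((n : ℝ) * ε ^ 2) / 2) := by
        rw [← Real.exp_add]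
        congr 1
        rw [htdef]
        ring

lemma vdist_half {γ : Type*} [Fintype γ] [DecidableEq γ] (q p : γ → ℝ)
    (hq : ∑ a, q a = 1) (hp : ∑ a, p a = 1) :
    2 * ∑ a ∈ Finset.univ.filter (fun a => p a < q a), (q a - p a) = Vdist q p := by
  have h0 : ∑ a, (q a - p a) = 0 := by
    rw [Finset.sum_sub_distrib, hq, hp]; ring
  have hsplit := Finset.sum_filter_add_sum_filter_not Finset.univ
    (fun a => p a < q a) (fun a => q a - p a)
  beta_reduce at hsplit
  rw [h0] at hsplit
  have habs : Vdist q p = ∑ a ∈ Finset.univ.filter (fun a => p a < q a), (q a - p a)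
      + ∑ a ∈ Finset.univ.filter (fun a => ¬p a < q a), (p a - q a) := by
    unfold Vdist
    have := Finset.sum_filter_add_sum_filter_not Finset.univ
      (fun a => p a < q a) (fun a => |q a - p a|)
    beta_reduce at this
    rw [← this]
    congr 1
    · exact Finset.sum_congr rfl (fun a ha => by
        have := (Finset.mem_filter.mp ha).2
        exact abs_of_nonneg (by linarith))
    · exact Finset.sum_congr rfl (fun a ha => by
        have := (Finset.mem_filter.mp ha).2
        push_neg at this
        rw [abs_of_nonpos (by linarith)]; ring)
  have hneg : ∑ a ∈ Finset.univ.filter (fun a => ¬p a < q a), (p a - q a)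
      = -∑ a ∈ Finset.univ.filter (fun a => ¬p a < q a), (q a - p a) := by
    rw [← Finset.sum_neg_distrib]
    exact Finset.sum_congr rfl (fun a _ => by ring)
  rw [habs, hneg]
  linarith

/-- Theorem 2: confidence interval for the mutual information.
With `ε = sqrt((2/n)·ln((2^(Mx·My)-2)/α))` and the half-width `ΔI(ε)` as in Theorem 1,
the interval `[I(p̂_n) - ΔI(ε), I(p̂_n) + ΔI(ε)]` contains `I(p)` with probability
at least `1 - α`. -/
theorem mutInfo_confidence_interval {Mx My : ℕ} (hMx : 2 ≤ Mx) (hMxy : Mx ≤ My)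
    (p : Fin Mx × Fin My → ℝ) (hp : IsDist p)
    (α : ℝ) (hα : α ∈ Set.Ioc (0 : ℝ) 1)
    {Ω : Type*} [MeasurableSpace Ω] (μ : Measure Ω) [IsProbabilityMeasure μ]
    {n : ℕ} (hn : 0 < n) (Z : Fin n → Ω → Fin Mx × Fin My)
    (hmeas : ∀ k, Measurable (Z k))
    (hindep : ProbabilityTheory.iIndepFun Z μ)
    (hdist : ∀ k, Measure.map (Z k) μ = distMeasure p)
    (ε : ℝ) (hε : ε = Real.sqrt (2 / (n : ℝ) * Real.log (((2 : ℝ) ^ (Mx * My) - 2) / α)))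
    (ΔI : ℝ)
    (hΔI : ΔI = if ε ≤ 2 - 2 / (Mx : ℝ) then
        ε / 2 * Real.log (((Mx : ℝ) * My - 1) * ((Mx : ℝ) - 1) * ((My : ℝ) - 1)) +
          3 * binEnt (ε / 2)
      else Real.log (Mx : ℝ)) :
    (μ {ω | mutInfo (empDist Z ω) - ΔI ≤ mutInfo p ∧
            mutInfo p ≤ mutInfo (empDist Z ω) + ΔI}).toReal ≥ 1 - α := by
  classical
  set T := {ω | mutInfo (empDist Z ω) - ΔI ≤ mutInfo p ∧
            mutInfo p ≤ mutInfo (empDist Z ω) + ΔI} with hTdef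
  have hα0 : 0 < α := hα.1
  have hα1 : α ≤ 1 := hα.2
  have hTne : μ T ≠ ⊤ := measure_ne_top μ T
  have hTle : μ T ≤ 1 := prob_le_one
  -- general conclusion helper
  have key : ENNReal.ofReal (1 - α) ≤ μ T → (μ T).toReal ≥ 1 - α := by
    intro h
    have h2 := ENNReal.toReal_mono hTne h
    rwa [ENNReal.toReal_ofReal (by linarith : (0:ℝ) ≤ 1 - α)] at h2
  by_cases hif : ε ≤ 2 - 2 / (Mx : ℝ)
  swap
  · -- else branch : the interval always holds
    apply key
    have hTuniv : T = Set.univ := by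
      apply Set.eq_univ_of_forall
      intro ω
      have hqd := isDist_empDist hn Z ω
      have := abs_mutInfo_sub_le_log hMx hMxy p (empDist Z ω) hp hqd
      have habs := abs_le.mp this
      rw [hTdef]
      simp only [Set.mem_setOf_eq]
      rw [hΔI, if_neg hif]
      exact ⟨by linarith [habs.1, habs.2], by linarith [habs.1, habs.2]⟩
    rw [hTuniv, measure_univ]
    exact ENNReal.ofReal_le_one.mpr (by linarith)
  -- main branch
  have hε0 : 0 ≤ ε := hε ▸ Real.sqrt_nonneg _
  have hn0 : (0 : ℝ) < n := by exact_mod_cast hn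
  set m : ℕ := Mx * My with hmdef
  set K : ℝ := (2 : ℝ) ^ m - 2 with hKdef
  have hm4 : 4 ≤ m := by
    calc 4 = 2 * 2 := rfl
    _ ≤ Mx * My := Nat.mul_le_mul hMx (le_trans hMx hMxy)
  have hK16 : (16 : ℝ) ≤ (2 : ℝ) ^ m := by
    calc (16 : ℝ) = 2 ^ 4 := by norm_num
    _ ≤ 2 ^ m := pow_le_pow_right₀ one_le_two hm4
  have hKpos : 0 < K := by rw [hKdef]; linarith
  have hKα1 : 1 ≤ K / α := (one_le_div hα0).mpr (by linarith)
  have hL0 : 0 ≤ Real.log (K / α) := Real.log_nonneg hKα1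
  have hε2 : ε ^ 2 = 2 / (n : ℝ) * Real.log (K / α) := by
    rw [hε]
    exact Real.sq_sqrt (by positivity)
  have hexp_eq : Real.exp (-((n : ℝ) * ε ^ 2) / 2) = α / K := by
    have h1 : (n : ℝ) * ε ^ 2 / 2 = Real.log (K / α) := by
      rw [hε2]; field_simp
    rw [show -((n : ℝ) * ε ^ 2) / 2 = -((n : ℝ) * ε ^ 2 / 2) by ring, h1,
      Real.exp_neg, Real.exp_log (by positivity), inv_div]
  -- the family of subsets
  haveI : Nonempty (Fin Mx) := ⟨⟨0, by omega⟩⟩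
  haveI : Nonempty (Fin My) := ⟨⟨0, by omega⟩⟩
  have hem : (∅ : Finset (Fin Mx × Fin My)) ≠ Finset.univ :=
    Ne.symm Finset.univ_nonempty.ne_empty
  set 𝒜 : Finset (Finset (Fin Mx × Fin My)) := Finset.univ \ {∅, Finset.univ} with h𝒜def
  have hcard𝒜 : 𝒜.card = 2 ^ m - 2 := by
    rw [h𝒜def, Finset.card_sdiff_of_subset (Finset.subset_univ _), Finset.card_univ,
      Fintype.card_finset]
    have hcardγ : Fintype.card (Fin Mx × Fin My) = m := by
      rw [hmdef]
      simp [Fintype.card_prod]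
    rw [hcardγ, Finset.card_pair hem]
  set E : Finset (Fin Mx × Fin My) → Set Ω := fun A =>
    {ω | (n : ℝ) * ε / 2 ≤
      ∑ k : Fin n, ((if Z k ω ∈ A then (1 : ℝ) else 0) - ∑ a ∈ A, p a)} with hEdef
  have hE_bound : ∀ A : Finset (Fin Mx × Fin My), μ (E A) ≤ ENNReal.ofReal (α / K) := by
    intro A
    have h1 := chernoff_A μ Z hmeas hindep p hp hdist A hε0
    rw [hexp_eq] at h1
    calc μ (E A) = ENNReal.ofReal ((μ (E A)).toReal) :=
          (ENNReal.ofReal_toReal (measure_ne_top μ _)).symm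
      _ ≤ ENNReal.ofReal (α / K) := ENNReal.ofReal_le_ofReal h1
  have hUnion : μ (⋃ A ∈ 𝒜, E A) ≤ ENNReal.ofReal α := by
    calc μ (⋃ A ∈ 𝒜, E A) ≤ ∑ A ∈ 𝒜, μ (E A) := measure_biUnion_finset_le 𝒜 E
      _ ≤ ∑ _A ∈ 𝒜, ENNReal.ofReal (α / K) :=
          Finset.sum_le_sum (fun A _ => hE_bound A)
      _ = 𝒜.card • ENNReal.ofReal (α / K) := Finset.sum_const _
      _ = ENNReal.ofReal ((𝒜.card : ℝ) * (α / K)) := by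
          rw [nsmul_eq_mul, ← ENNReal.ofReal_natCast 𝒜.card,
            ← ENNReal.ofReal_mul (Nat.cast_nonneg _)]
      _ = ENNReal.ofReal α := by
          congr 1
          have hcast : ((𝒜.card : ℕ) : ℝ) = K := by
            rw [hcard𝒜, hKdef]
            have h2m : 2 ≤ 2 ^ m := by
              calc 2 = 2 ^ 1 := rfl
              _ ≤ 2 ^ m := Nat.pow_le_pow_right (by norm_num) (by omega)
            push_cast [Nat.cast_sub h2m]
            norm_num
          rw [hcast]
          field_simp
  -- the inclusion
  have hincl : {ω | ε < Vdist (empDist Z ω) p} ⊆ ⋃ A ∈ 𝒜, E A := by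
    intro ω hω
    simp only [Set.mem_setOf_eq] at hω
    set q : (Fin Mx × Fin My) → ℝ := empDist Z ω with hqdef
    have hqd : IsDist q := isDist_empDist hn Z ω
    set A : Finset (Fin Mx × Fin My) := Finset.univ.filter (fun a => p a < q a) with hAdef
    have hhalf := vdist_half q p hqd.2 hp.2
    rw [← hAdef] at hhalf
    have hgt : ε / 2 < ∑ a ∈ A, (q a - p a) := by linarith
    have hsum_nonneg : (0:ℝ) < ∑ a ∈ A, (q a - p a) := by linarith
    have hA1 : A ≠ ∅ := by
      intro h
      rw [h, Finset.sum_empty] at hsum_nonneg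
      linarith
    have hA2 : A ≠ Finset.univ := by
      intro h
      have h0 : ∑ a, (q a - p a) = 0 := by
        rw [Finset.sum_sub_distrib, hqd.2, hp.2]; ring
      rw [h, h0] at hsum_nonneg
      linarith
    have hAmem : A ∈ 𝒜 := by
      rw [h𝒜def, Finset.mem_sdiff]
      refine ⟨Finset.mem_univ _, ?_⟩
      simp only [Finset.mem_insert, Finset.mem_singleton]
      push_neg
      exact ⟨Finset.nonempty_iff_ne_empty.mpr hA1, hA2⟩
    apply Set.mem_biUnion hAmem
    -- membership in E A
    rw [hEdef]
    simp only [Set.mem_setOf_eq]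
    set cnt : ℕ := (Finset.univ.filter (fun k => Z k ω ∈ A)).card with hcntdef
    have hsum_ite : ∑ k : Fin n, (if Z k ω ∈ A then (1:ℝ) else 0) = cnt := by
      rw [Finset.sum_boole, hcntdef]
    have hqA : ∑ a ∈ A, q a = (cnt : ℝ) / n := by
      have hfib : cnt = ∑ b ∈ A, (Finset.univ.filter (fun k => Z k ω = b)).card := by
        rw [hcntdef]
        rw [Finset.card_eq_sum_card_fiberwise
          (f := fun k => Z k ω) (s := Finset.univ.filter (fun k => Z k ω ∈ A)) (t := A) (fun k hk => (Finset.mem_filter.mp hk).2)]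
        apply Finset.sum_congr rfl
        intro b hb
        congr 1
        rw [Finset.filter_filter]
        apply Finset.filter_congr
        intro k _
        constructor
        · exact fun h => h.2
        · intro h
          subst h
          exact ⟨hb, rfl⟩
      rw [hfib]
      rw [Nat.cast_sum, Finset.sum_div]
      rfl
    have hsum : ∑ k : Fin n, ((if Z k ω ∈ A then (1:ℝ) else 0) - ∑ a ∈ A, p a)
        = (cnt : ℝ) - (n : ℝ) * ∑ a ∈ A, p a := by
      rw [Finset.sum_sub_distrib, hsum_ite, Finset.sum_const, Finset.card_univ,
        Fintype.card_fin, nsmul_eq_mul]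
    rw [hsum]
    have hdiff : ∑ a ∈ A, (q a - p a) = (cnt : ℝ) / n - ∑ a ∈ A, p a := by
      rw [Finset.sum_sub_distrib, hqA]
    rw [hdiff] at hgt
    have hcnt_gt : (n : ℝ) * (ε / 2 + ∑ a ∈ A, p a) < cnt := by
      have h' : ε / 2 + ∑ a ∈ A, p a < (cnt : ℝ) / n := by linarith
      calc (n : ℝ) * (ε / 2 + ∑ a ∈ A, p a) < (n : ℝ) * ((cnt : ℝ) / n) :=
            mul_lt_mul_of_pos_left h' hn0
        _ = (cnt : ℝ) := by field_simp
    nlinarith [hcnt_gt]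
  -- conclude via union bound
  apply key
  have hcover : Set.univ ⊆ T ∪ (⋃ A ∈ 𝒜, E A) := by
    intro ω _
    by_cases hB : ω ∈ ⋃ A ∈ 𝒜, E A
    · exact Or.inr hB
    · left
      have hV : Vdist (empDist Z ω) p ≤ ε := by
        by_contra h
        push_neg at h
        exact hB (hincl h)
      have hqd := isDist_empDist hn Z ω
      have hbound := mutInfo_cont hMx hMxy p (empDist Z ω) hp hqd ε hε0 hV hif
      have habs := abs_le.mp hbound
      rw [hTdef]
      simp only [Set.mem_setOf_eq]
      rw [hΔI, if_pos hif]
      exact ⟨by linarith [habs.1, habs.2], by linarith [habs.1, habs.2]⟩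
  have h1 : (1 : ENNReal) ≤ μ T + ENNReal.ofReal α := by
    calc (1 : ENNReal) = μ Set.univ := measure_univ.symm
      _ ≤ μ (T ∪ (⋃ A ∈ 𝒜, E A)) := measure_mono hcover
      _ ≤ μ T + μ (⋃ A ∈ 𝒜, E A) := measure_union_le _ _
      _ ≤ μ T + ENNReal.ofReal α := add_le_add_right hUnion _
  have h3 : (1 : ENNReal) - ENNReal.ofReal α ≤ μ T :=
    tsub_le_iff_right.mpr h1
  calc ENNReal.ofReal (1 - α) = 1 - ENNReal.ofReal α := by
        rw [ENNReal.ofReal_sub _ hα0.le, ENNReal.ofReal_one]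
    _ ≤ μ T := h3
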